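/- (Convergence of PFASST in the non-stiff limit.) There exist constants c > 0 and μ* > 0 such that for all μ with 0 < μ < μ*, the matrices P̂(μ) and P̃(μ) are invertible and the spectral radius of the full PFASST iteration matrix satisfies ρ( T_S(μ) · T_CGC(μ) ) ≤ c · μ^{1/L}. -/

import Mathlib

/-!
STATEMENT 7 (Convergence of PFASST in the non-stiff limit): There exist c > 0 and
μ* > 0 such that for all 0 < μ < μ*, the matrices P̂(μ) and P̃(μ) are invertible and
ρ( T_S(μ) · T_CGC(μ) ) ≤ c · μ^(1/L).
-/

noncomputable section

open Matrix
open scoped Kronecker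

/-- Complexification of a real matrix. -/
def cmplx {m n : Type*} (A : Matrix m n ℝ) : Matrix m n ℂ := A.map (fun x => (x : ℂ))

/-- The matrix `E` with ones on the first subdiagonal and zeros elsewhere. -/
def Emat (L : ℕ) : Matrix (Fin L) (Fin L) ℂ :=
  Matrix.of fun i j => if (i : ℕ) = (j : ℕ) + 1 then 1 else 0

/-- The matrix `N_M` whose last column consists of ones, all other entries zero. -/
def Nmat (M : ℕ) : Matrix (Fin M) (Fin M) ℂ :=
  Matrix.of fun _ j => if (j : ℕ) = M - 1 then 1 else 0

/-- `H = N_M ⊗ I_N`. -/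
def Hmat (M N : ℕ) : Matrix (Fin M × Fin N) (Fin M × Fin N) ℂ :=
  Nmat M ⊗ₖ (1 : Matrix (Fin N) (Fin N) ℂ)

/-- `E ⊗ H`. -/
def EH (L M N : ℕ) : Matrix (Fin L × Fin M × Fin N) (Fin L × Fin M × Fin N) ℂ :=
  Emat L ⊗ₖ Hmat M N

/-- The composite collocation matrix `C(μ) = I − μ (I_L ⊗ Q ⊗ A) − E ⊗ H`. -/
def Cmat (L : ℕ) {M N : ℕ} (Q : Matrix (Fin M) (Fin M) ℝ) (A : Matrix (Fin N) (Fin N) ℂ)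
    (μ : ℝ) : Matrix (Fin L × Fin M × Fin N) (Fin L × Fin M × Fin N) ℂ :=
  1 - (μ : ℂ) • ((1 : Matrix (Fin L) (Fin L) ℂ) ⊗ₖ (cmplx Q ⊗ₖ A)) - EH L M N

/-- The approximative block Jacobi preconditioner `P̂(μ) = I − μ (I_L ⊗ Q_Δ ⊗ A)`. -/
def Phat (L : ℕ) {M N : ℕ} (QΔ : Matrix (Fin M) (Fin M) ℝ) (A : Matrix (Fin N) (Fin N) ℂ)
    (μ : ℝ) : Matrix (Fin L × Fin M × Fin N) (Fin L × Fin M × Fin N) ℂ :=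
  1 - (μ : ℂ) • ((1 : Matrix (Fin L) (Fin L) ℂ) ⊗ₖ (cmplx QΔ ⊗ₖ A))

/-- The smoother iteration matrix `T_S(μ) = I − P̂(μ)⁻¹ C(μ)`. -/
def Tsmooth (L : ℕ) {M N : ℕ} (Q QΔ : Matrix (Fin M) (Fin M) ℝ)
    (A : Matrix (Fin N) (Fin N) ℂ) (μ : ℝ) :
    Matrix (Fin L × Fin M × Fin N) (Fin L × Fin M × Fin N) ℂ :=
  1 - (Phat L QΔ A μ)⁻¹ * Cmat L Q A μ

/-- Restriction operator `T_F^C = I_L ⊗ T_{F,Q}^C ⊗ T_{F,A}^C`. -/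
def TFCmat (L : ℕ) {M N M' N' : ℕ} (TFQ : Matrix (Fin M') (Fin M) ℝ)
    (TFA : Matrix (Fin N') (Fin N) ℂ) :
    Matrix (Fin L × Fin M' × Fin N') (Fin L × Fin M × Fin N) ℂ :=
  (1 : Matrix (Fin L) (Fin L) ℂ) ⊗ₖ (cmplx TFQ ⊗ₖ TFA)

/-- Interpolation operator `T_C^F = I_L ⊗ T_{C,Q}^F ⊗ T_{C,A}^F`. -/
def TCFmat (L : ℕ) {M N M' N' : ℕ} (TCQ : Matrix (Fin M) (Fin M') ℝ)
    (TCA : Matrix (Fin N) (Fin N') ℂ) :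
    Matrix (Fin L × Fin M × Fin N) (Fin L × Fin M' × Fin N') ℂ :=
  (1 : Matrix (Fin L) (Fin L) ℂ) ⊗ₖ (cmplx TCQ ⊗ₖ TCA)

/-- The coarse approximative block Gauss-Seidel preconditioner
`P̃(μ) = I − μ (I_L ⊗ Q̃_Δ ⊗ Ã) − E ⊗ H̃`. -/
def Ptilde (L : ℕ) {M' N' : ℕ} (QΔt : Matrix (Fin M') (Fin M') ℝ)
    (At : Matrix (Fin N') (Fin N') ℂ) (μ : ℝ) :
    Matrix (Fin L × Fin M' × Fin N') (Fin L × Fin M' × Fin N') ℂ :=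
  1 - (μ : ℂ) • ((1 : Matrix (Fin L) (Fin L) ℂ) ⊗ₖ (cmplx QΔt ⊗ₖ At)) - EH L M' N'

/-- The coarse-grid correction iteration matrix
`T_CGC(μ) = I − T_C^F P̃(μ)⁻¹ T_F^C C(μ)`. -/
def Tcgc (L : ℕ) {M N M' N' : ℕ} (Q : Matrix (Fin M) (Fin M) ℝ)
    (A : Matrix (Fin N) (Fin N) ℂ)
    (QΔt : Matrix (Fin M') (Fin M') ℝ) (At : Matrix (Fin N') (Fin N') ℂ)
    (TFQ : Matrix (Fin M') (Fin M) ℝ) (TFA : Matrix (Fin N') (Fin N) ℂ)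
    (TCQ : Matrix (Fin M) (Fin M') ℝ) (TCA : Matrix (Fin N) (Fin N') ℂ) (μ : ℝ) :
    Matrix (Fin L × Fin M × Fin N) (Fin L × Fin M × Fin N) ℂ :=
  1 - TCFmat L TCQ TCA * (Ptilde L QΔt At μ)⁻¹ * TFCmat L TFQ TFA * Cmat L Q A μ


/-! ### Auxiliary lemmas -/

section PfasstAux

open Asymptotics Filter NormedRing
open scoped Topology ENNReal NNReal

/-- Powers of the subdiagonal shift matrix. -/
lemma Emat_pow (L k : ℕ) :
    (Emat L) ^ k = Matrix.of fun i j : Fin L => if (i : ℕ) = (j : ℕ) + k then 1 else 0 := by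
  induction k with
  | zero => ext i j; simp [Matrix.one_apply, Fin.ext_iff]
  | succ k ih =>
    ext i j
    rw [pow_succ, ih, Matrix.mul_apply]
    simp only [Matrix.of_apply, Emat, ite_mul, one_mul, zero_mul, mul_ite, mul_one, mul_zero]
    by_cases hj : (j : ℕ) + 1 < L
    · rw [Finset.sum_eq_single (⟨(j : ℕ) + 1, hj⟩ : Fin L)]
      · have h3 : (j : ℕ) + 1 + k = (j : ℕ) + (k + 1) := by omega
        simp [h3]
      · intro l _ hl
        have h2 : ¬ (l : ℕ) = (j : ℕ) + 1 := fun hcon => hl (Fin.ext hcon)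
        simp [h2]
      · intro h; exact absurd (Finset.mem_univ _) h
    · rw [if_neg (by omega)]
      refine Finset.sum_eq_zero fun l _ => ?_
      rw [if_neg (by omega)]

lemma Emat_pow_self (L : ℕ) : (Emat L) ^ L = 0 := by
  ext i j
  rw [Emat_pow]
  simp only [Matrix.of_apply, Matrix.zero_apply, ite_eq_right_iff]
  intro h
  exact absurd h (by omega)

lemma kron_pow {l m : Type*} [Fintype l] [Fintype m] [DecidableEq l] [DecidableEq m]
    (A : Matrix l l ℂ) (B : Matrix m m ℂ) (k : ℕ) :
    (A ⊗ₖ B) ^ k = (A ^ k) ⊗ₖ (B ^ k) := by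
  induction k with
  | zero => simp [Matrix.one_kronecker_one]
  | succ k ih => rw [pow_succ, ih, ← Matrix.mul_kronecker_mul, ← pow_succ, ← pow_succ]

lemma kronecker_sub_right {l m p q : Type*} (A : Matrix l m ℂ) (B C : Matrix p q ℂ) :
    A ⊗ₖ B - A ⊗ₖ C = A ⊗ₖ (B - C) := by
  ext ⟨i, j⟩ ⟨k, r⟩
  simp [Matrix.kroneckerMap_apply, mul_sub]

section NormStuff

attribute [local instance] Matrix.linftyOpNormedAddCommGroup Matrix.linftyOpNormedSpace
  Matrix.linftyOpNormedRing Matrix.linftyOpNormedAlgebra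

local instance pfasstMatCompleteSpace {ι : Type*} [Fintype ι] :
    CompleteSpace (Matrix ι ι ℂ) :=
  FiniteDimensional.complete ℂ (Matrix ι ι ℂ)

variable {ι : Type*} [Fintype ι] [DecidableEq ι]

lemma pfasst_smul_isBigO {l m : Type*} [Fintype l] [Fintype m] (B : Matrix l m ℂ) {F : Filter ℝ} :
    (fun μ : ℝ => -((μ:ℂ) • B)) =O[F] fun μ => μ := by
  refine isBigO_iff.mpr ⟨‖B‖, Filter.Eventually.of_forall fun μ => ?_⟩
  simp [norm_smul, Real.norm_eq_abs, abs_mul, abs_norm, mul_comm]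

lemma pfasst_inv_perturb (P0 B : Matrix ι ι ℂ) (hx : IsUnit P0) :
    (fun μ : ℝ => Ring.inverse (P0 - (μ:ℂ) • B) - Ring.inverse P0) =O[𝓝 0] fun μ => μ := by
  have ht : Filter.Tendsto (fun μ : ℝ => -((μ:ℂ) • B)) (𝓝 0) (𝓝 0) := by
    have : Continuous fun μ : ℝ => -((μ:ℂ) • B) :=
      (Complex.continuous_ofReal.smul continuous_const).neg
    simpa using this.tendsto 0
  have h1 := (inverse_add_norm_diff_first_order hx.unit).comp_tendsto ht
  have e2 : (↑hx.unit⁻¹ : Matrix ι ι ℂ) = Ring.inverse P0 := by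
    rw [← Ring.inverse_unit, hx.unit_spec]
  have h2 : (fun μ : ℝ => Ring.inverse (P0 - (μ:ℂ) • B) - Ring.inverse P0)
      =O[𝓝 0] fun μ : ℝ => ‖-((μ:ℂ) • B)‖ :=
    h1.congr (fun μ => by simp [Function.comp, hx.unit_spec, e2, sub_eq_add_neg]) (fun μ => rfl)
  exact h2.trans (pfasst_smul_isBigO B).norm_left

lemma pfasst_unit_perturb (P0 B : Matrix ι ι ℂ) (hx : IsUnit P0) :
    ∀ᶠ μ : ℝ in 𝓝 0, IsUnit (P0 - (μ:ℂ) • B) := by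
  have hc : Continuous fun μ : ℝ => P0 - (μ:ℂ) • B :=
    continuous_const.sub (Complex.continuous_ofReal.smul continuous_const)
  have : {x : Matrix ι ι ℂ | IsUnit x} ∈ 𝓝 (P0 - ((0:ℝ):ℂ) • B) := by
    have h0 : P0 - ((0:ℝ):ℂ) • B = P0 := by simp
    rw [h0]; exact Units.isOpen.mem_nhds hx
  exact hc.continuousAt.eventually_mem this

lemma pfasst_matmul_isBigO {α : Type*} {F : Filter α} {l m n : Type*}
    [Fintype l] [Fintype m] [Fintype n]
    {f : α → Matrix l m ℂ} {f' : α → Matrix m n ℂ} {g g' : α → ℝ}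
    (h : f =O[F] g) (h' : f' =O[F] g') :
    (fun x => f x * f' x) =O[F] fun x => g x * g' x := by
  rw [isBigO_iff] at h h' ⊢
  obtain ⟨c, hc⟩ := h; obtain ⟨c', hc'⟩ := h'
  refine ⟨c * c', ?_⟩
  filter_upwards [hc, hc'] with x h1 h2
  calc ‖f x * f' x‖ ≤ ‖f x‖ * ‖f' x‖ := Matrix.linfty_opNorm_mul _ _
    _ ≤ (c * ‖g x‖) * (c' * ‖g' x‖) :=
        mul_le_mul h1 h2 (norm_nonneg _) (le_trans (norm_nonneg _) h1)
    _ = c * c' * ‖g x * g' x‖ := by rw [_root_.norm_mul]; ring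

lemma pfasst_matmul_O1_left {α : Type*} {F : Filter α} {l m n : Type*}
    [Fintype l] [Fintype m] [Fintype n]
    {f : α → Matrix l m ℂ} {f' : α → Matrix m n ℂ} {g : α → ℝ}
    (h : f =O[F] fun _ => (1:ℝ)) (h' : f' =O[F] g) :
    (fun x => f x * f' x) =O[F] g :=
  (pfasst_matmul_isBigO h h').congr (fun _ => rfl) (fun x => one_mul _)

lemma pfasst_matmul_O1_right {α : Type*} {F : Filter α} {l m n : Type*}
    [Fintype l] [Fintype m] [Fintype n]
    {f : α → Matrix l m ℂ} {f' : α → Matrix m n ℂ} {g : α → ℝ}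
    (h : f =O[F] g) (h' : f' =O[F] fun _ => (1:ℝ)) :
    (fun x => f x * f' x) =O[F] g :=
  (pfasst_matmul_isBigO h h').congr (fun _ => rfl) (fun x => mul_one _)

lemma pfasst_const_isBigO {α : Type*} {F : Filter α} {l m : Type*} [Fintype l] [Fintype m]
    (X : Matrix l m ℂ) : (fun _ : α => X) =O[F] fun _ => (1:ℝ) :=
  isBigO_const_const X one_ne_zero F

lemma pfasst_mu_isBigO_one : (fun μ : ℝ => μ) =O[𝓝 (0:ℝ)] fun _ => (1:ℝ) :=
  Filter.Tendsto.isBigO_one ℝ (by exact tendsto_id)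

lemma pfasst_bigO_one_of_dev {l m : Type*} [Fintype l] [Fintype m]
    {f : ℝ → Matrix l m ℂ} {X : Matrix l m ℂ}
    (h : (fun μ => f μ - X) =O[𝓝 (0:ℝ)] fun μ => μ) :
    f =O[𝓝 (0:ℝ)] fun _ => (1:ℝ) :=
  ((h.trans pfasst_mu_isBigO_one).add (pfasst_const_isBigO X)).congr
    (fun μ => by abel) (fun _ => rfl)

/-- Core of the PFASST convergence estimate, stated abstractly. -/
lemma pfasst_core {ιf ιc : Type*} [Fintype ιf] [DecidableEq ιf] [Nonempty ιf]
    [Fintype ιc] [DecidableEq ιc] (L : ℕ) (hL : 0 < L)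
    (G Bf Ef : Matrix ιf ιf ℂ) (Bc Ec : Matrix ιc ιc ℂ)
    (TFC : Matrix ιc ιf ℂ) (TCF : Matrix ιf ιc ℂ)
    (hEc : IsNilpotent Ec)
    (hnil : (Ef * (1 - TCF * TFC)) ^ L = 0)
    (hcompat : Ec * TFC = TFC * Ef) :
    ∃ c > (0:ℝ), ∃ μs > (0:ℝ), ∀ μ : ℝ, 0 < μ → μ < μs →
      IsUnit (1 - (μ:ℂ) • Bf) ∧ IsUnit (1 - (μ:ℂ) • Bc - Ec) ∧
      spectralRadius ℂ
        ((1 - (1 - (μ:ℂ) • Bf)⁻¹ * (1 - (μ:ℂ) • G - Ef)) *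
         (1 - TCF * (1 - (μ:ℂ) • Bc - Ec)⁻¹ * TFC * (1 - (μ:ℂ) • G - Ef)))
        ≤ ENNReal.ofReal (c * μ ^ ((1 : ℝ) / (L : ℝ))) := by
  have hP0 : IsUnit ((1 : Matrix ιc ιc ℂ) - Ec) := hEc.isUnit_one_sub
  have hPt : ∀ μ : ℝ, (1 : Matrix ιc ιc ℂ) - (μ:ℂ) • Bc - Ec = (1 - Ec) - (μ:ℂ) • Bc :=
    fun μ => sub_right_comm _ _ _
  have hCc : ∀ μ : ℝ, (1 : Matrix ιf ιf ℂ) - (μ:ℂ) • G - Ef = (1 - Ef) - (μ:ℂ) • G :=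
    fun μ => sub_right_comm _ _ _
  -- basic big-O facts
  have hRhat : (fun μ : ℝ => Ring.inverse ((1 : Matrix ιf ιf ℂ) - (μ:ℂ) • Bf) - 1)
      =O[𝓝 0] fun μ => μ := by
    simpa [Ring.inverse_one] using pfasst_inv_perturb (1 : Matrix ιf ιf ℂ) Bf isUnit_one
  have hRt : (fun μ : ℝ => Ring.inverse (((1 : Matrix ιc ιc ℂ) - Ec) - (μ:ℂ) • Bc)
      - Ring.inverse (1 - Ec)) =O[𝓝 0] fun μ => μ := pfasst_inv_perturb _ Bc hP0
  have hCd : (fun μ : ℝ => (((1 : Matrix ιf ιf ℂ) - Ef) - (μ:ℂ) • G) - (1 - Ef))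
      =O[𝓝 (0:ℝ)] fun μ => μ :=
    (pfasst_smul_isBigO G).congr (fun μ => by abel) (fun _ => rfl)
  have hC1 : (fun μ : ℝ => ((1 : Matrix ιf ιf ℂ) - Ef) - (μ:ℂ) • G) =O[𝓝 (0:ℝ)] fun _ => (1:ℝ) :=
    pfasst_bigO_one_of_dev hCd
  -- the key compatibility identity
  have hTFC : TFC * ((1 : Matrix ιf ιf ℂ) - Ef) = (1 - Ec) * TFC := by
    rw [Matrix.mul_sub, Matrix.mul_one, ← hcompat, Matrix.sub_mul, Matrix.one_mul]
  have hkey : Ring.inverse ((1 : Matrix ιc ιc ℂ) - Ec) * (TFC * (1 - Ef)) = TFC := by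
    rw [hTFC, ← Matrix.mul_assoc, Ring.inverse_mul_cancel _ hP0, Matrix.one_mul]
  -- deviation of the smoother
  have hTs : (fun μ : ℝ =>
      (1 - Ring.inverse (1 - (μ:ℂ) • Bf) * (((1 : Matrix ιf ιf ℂ) - Ef) - (μ:ℂ) • G)) - Ef)
      =O[𝓝 0] fun μ => μ := by
    have h1 : (fun μ : ℝ => (Ring.inverse ((1 : Matrix ιf ιf ℂ) - (μ:ℂ) • Bf) - 1) *
        (((1 : Matrix ιf ιf ℂ) - Ef) - (μ:ℂ) • G)) =O[𝓝 0] fun μ => μ :=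
      pfasst_matmul_O1_right hRhat hC1
    refine ((h1.add hCd).neg_left).congr (fun μ => ?_) (fun _ => rfl)
    simp only [Matrix.sub_mul, Matrix.one_mul]
    abel
  -- deviation of the coarse grid correction
  have hTc : (fun μ : ℝ =>
      (1 - TCF * Ring.inverse (((1 : Matrix ιc ιc ℂ) - Ec) - (μ:ℂ) • Bc) * TFC *
        (((1 : Matrix ιf ιf ℂ) - Ef) - (μ:ℂ) • G)) - (1 - TCF * TFC)) =O[𝓝 0] fun μ => μ := by
    have t1 : (fun μ : ℝ => TCF *
        ((Ring.inverse (((1 : Matrix ιc ιc ℂ) - Ec) - (μ:ℂ) • Bc) - Ring.inverse (1 - Ec)) *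
          (TFC * (((1 : Matrix ιf ιf ℂ) - Ef) - (μ:ℂ) • G)))) =O[𝓝 0] fun μ => μ :=
      pfasst_matmul_O1_left (pfasst_const_isBigO TCF)
        (pfasst_matmul_O1_right hRt (pfasst_matmul_O1_left (pfasst_const_isBigO TFC) hC1))
    have t2 : (fun μ : ℝ => TCF * (Ring.inverse ((1 : Matrix ιc ιc ℂ) - Ec) *
        (TFC * ((((1 : Matrix ιf ιf ℂ) - Ef) - (μ:ℂ) • G) - (1 - Ef))))) =O[𝓝 0] fun μ => μ :=
      pfasst_matmul_O1_left (pfasst_const_isBigO TCF)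
        (pfasst_matmul_O1_left (pfasst_const_isBigO (Ring.inverse ((1 : Matrix ιc ιc ℂ) - Ec)))
          (pfasst_matmul_O1_left (pfasst_const_isBigO TFC) hCd))
    refine ((t1.add t2).neg_left).congr (fun μ => ?_) (fun _ => rfl)
    rw [show TCF * TFC = TCF * (Ring.inverse ((1 : Matrix ιc ιc ℂ) - Ec) * (TFC * (1 - Ef)))
      by rw [hkey]]
    simp only [Matrix.mul_sub, Matrix.sub_mul, Matrix.mul_assoc, Matrix.mul_one, Matrix.one_mul]
    abel
  -- deviation of the product
  have hTs1 := pfasst_bigO_one_of_dev hTs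
  have hT : (fun μ : ℝ =>
      (1 - Ring.inverse (1 - (μ:ℂ) • Bf) * (((1 : Matrix ιf ιf ℂ) - Ef) - (μ:ℂ) • G)) *
      (1 - TCF * Ring.inverse (((1 : Matrix ιc ιc ℂ) - Ec) - (μ:ℂ) • Bc) * TFC *
        (((1 : Matrix ιf ιf ℂ) - Ef) - (μ:ℂ) • G))
      - Ef * (1 - TCF * TFC)) =O[𝓝 0] fun μ => μ := by
    have u1 := pfasst_matmul_O1_right hTs (pfasst_const_isBigO
      ((1 : Matrix ιf ιf ℂ) - TCF * TFC))
    have u2 := pfasst_matmul_O1_left hTs1 hTc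
    refine (u2.add u1).congr (fun μ => ?_) (fun _ => rfl)
    simp only [Matrix.mul_sub, Matrix.sub_mul]
    abel
  have hT1 := pfasst_bigO_one_of_dev hT
  -- powers
  have hpow : ∀ k : ℕ, (fun μ : ℝ =>
      ((1 - Ring.inverse (1 - (μ:ℂ) • Bf) * (((1 : Matrix ιf ιf ℂ) - Ef) - (μ:ℂ) • G)) *
       (1 - TCF * Ring.inverse (((1 : Matrix ιc ιc ℂ) - Ec) - (μ:ℂ) • Bc) * TFC *
         (((1 : Matrix ιf ιf ℂ) - Ef) - (μ:ℂ) • G))) ^ k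
      - (Ef * (1 - TCF * TFC)) ^ k) =O[𝓝 0] fun μ => μ := by
    intro k
    induction k with
    | zero =>
      simp only [pow_zero, sub_self]
      exact isBigO_zero _ _
    | succ k ih =>
      have hgk1 := pfasst_bigO_one_of_dev ih
      have v1 := pfasst_matmul_O1_left hgk1 hT
      have v2 := pfasst_matmul_O1_right ih (pfasst_const_isBigO (Ef * (1 - TCF * TFC)))
      refine (v1.add v2).congr (fun μ => ?_) (fun _ => rfl)
      simp only [pow_succ, Matrix.mul_sub, Matrix.sub_mul]
      abel
  have hfin : (fun μ : ℝ =>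
      ((1 - Ring.inverse (1 - (μ:ℂ) • Bf) * (((1 : Matrix ιf ιf ℂ) - Ef) - (μ:ℂ) • G)) *
       (1 - TCF * Ring.inverse (((1 : Matrix ιc ιc ℂ) - Ec) - (μ:ℂ) • Bc) * TFC *
         (((1 : Matrix ιf ιf ℂ) - Ef) - (μ:ℂ) • G))) ^ L) =O[𝓝 0] fun μ => μ :=
    (hpow L).congr (fun μ => by rw [hnil, sub_zero]) (fun _ => rfl)
  obtain ⟨c0, hc0pos, hc0w⟩ := hfin.exists_pos
  have hbound := hc0w.bound
  have hu1' := pfasst_unit_perturb (1 : Matrix ιf ιf ℂ) Bf isUnit_one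
  have hu2' := pfasst_unit_perturb ((1 : Matrix ιc ιc ℂ) - Ec) Bc hP0
  have hall := hbound.and (hu1'.and hu2')
  rw [Metric.eventually_nhds_iff] at hall
  obtain ⟨ε, hε, hball⟩ := hall
  refine ⟨max c0 1, lt_of_lt_of_le one_pos (le_max_right _ _), ε, hε, fun μ hμ0 hμε => ?_⟩
  have hd : dist μ 0 < ε := by
    simpa [Real.dist_eq, abs_of_pos hμ0] using hμε
  obtain ⟨hb, hu1, hu2⟩ := hball hd
  have hu1'' : IsUnit ((1 : Matrix ιf ιf ℂ) - (μ:ℂ) • Bf) := hu1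
  have hu2'' : IsUnit ((1 : Matrix ιc ιc ℂ) - (μ:ℂ) • Bc - Ec) := by rw [hPt μ]; exact hu2
  refine ⟨hu1'', hu2'', ?_⟩
  rw [Matrix.nonsing_inv_eq_ringInverse, Matrix.nonsing_inv_eq_ringInverse, hPt μ, hCc μ]
  have key := spectrum.spectralRadius_le_pow_nnnorm_pow_one_div ℂ
    ((1 - Ring.inverse ((1 : Matrix ιf ιf ℂ) - (μ:ℂ) • Bf) *
        (((1 : Matrix ιf ιf ℂ) - Ef) - (μ:ℂ) • G)) *
     (1 - TCF * Ring.inverse (((1 : Matrix ιc ιc ℂ) - Ec) - (μ:ℂ) • Bc) * TFC *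
        (((1 : Matrix ιf ιf ℂ) - Ef) - (μ:ℂ) • G))) (L - 1)
  have hL1 : L - 1 + 1 = L := by omega
  rw [hL1] at key
  have hcast : ((L - 1 : ℕ) : ℝ) + 1 = (L : ℝ) := by
    exact_mod_cast congrArg (fun n : ℕ => (n : ℝ)) hL1
  rw [hcast] at key
  simp only [nnnorm_one, ENNReal.coe_one, ENNReal.one_rpow, mul_one] at key
  refine key.trans ?_
  have hb' : ‖((1 - Ring.inverse ((1 : Matrix ιf ιf ℂ) - (μ:ℂ) • Bf) *
        (((1 : Matrix ιf ιf ℂ) - Ef) - (μ:ℂ) • G)) *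
      (1 - TCF * Ring.inverse (((1 : Matrix ιc ιc ℂ) - Ec) - (μ:ℂ) • Bc) * TFC *
        (((1 : Matrix ιf ιf ℂ) - Ef) - (μ:ℂ) • G))) ^ L‖ ≤ c0 * μ := by
    have := hb
    rwa [Real.norm_eq_abs, abs_of_pos hμ0] at this
  calc ((‖((1 - Ring.inverse ((1 : Matrix ιf ιf ℂ) - (μ:ℂ) • Bf) *
        (((1 : Matrix ιf ιf ℂ) - Ef) - (μ:ℂ) • G)) *
      (1 - TCF * Ring.inverse (((1 : Matrix ιc ιc ℂ) - Ec) - (μ:ℂ) • Bc) * TFC *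
        (((1 : Matrix ιf ιf ℂ) - Ef) - (μ:ℂ) • G))) ^ L‖₊ : ℝ≥0) : ℝ≥0∞) ^ ((1:ℝ) / (L:ℝ))
      ≤ (ENNReal.ofReal (c0 * μ)) ^ ((1:ℝ) / (L:ℝ)) := by
        refine ENNReal.rpow_le_rpow ?_ (by positivity)
        rw [← ENNReal.ofReal_coe_nnreal, coe_nnnorm]
        exact ENNReal.ofReal_le_ofReal hb'
    _ = ENNReal.ofReal ((c0 * μ) ^ ((1:ℝ) / (L:ℝ))) :=
        ENNReal.ofReal_rpow_of_pos (by positivity)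
    _ ≤ ENNReal.ofReal (max c0 1 * μ ^ ((1:ℝ) / (L:ℝ))) := by
        refine ENNReal.ofReal_le_ofReal ?_
        rw [Real.mul_rpow hc0pos.le hμ0.le]
        have hLc : (1:ℝ) ≤ (L:ℝ) := by exact_mod_cast hL
        have h1L : (1:ℝ) / (L:ℝ) ≤ 1 := by
          rw [div_le_one (by positivity)]; exact hLc
        have hc : c0 ^ ((1:ℝ) / (L:ℝ)) ≤ max c0 1 := by
          rcases le_total c0 1 with h | h
          · exact (Real.rpow_le_one hc0pos.le h (by positivity)).trans (le_max_right _ _)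
          · calc c0 ^ ((1:ℝ) / (L:ℝ)) ≤ c0 ^ (1:ℝ) :=
                Real.rpow_le_rpow_of_exponent_le h h1L
              _ = c0 := Real.rpow_one _
              _ ≤ max c0 1 := le_max_left _ _
        exact mul_le_mul_of_nonneg_right hc (Real.rpow_nonneg hμ0.le _)

end NormStuff

end PfasstAux

theorem stmt_7 (L M N M' N' : ℕ) (hL : 0 < L) (hM : 0 < M) (hN : 0 < N)
    (hM' : 0 < M') (hN' : 0 < N')
    (Q QΔ : Matrix (Fin M) (Fin M) ℝ) (A : Matrix (Fin N) (Fin N) ℂ)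
    (QΔt : Matrix (Fin M') (Fin M') ℝ) (At : Matrix (Fin N') (Fin N') ℂ)
    (TFQ : Matrix (Fin M') (Fin M) ℝ) (TFA : Matrix (Fin N') (Fin N) ℂ)
    (TCQ : Matrix (Fin M) (Fin M') ℝ) (TCA : Matrix (Fin N) (Fin N') ℂ)
    (hcompat : EH L M' N' * TFCmat L TFQ TFA = TFCmat L TFQ TFA * EH L M N) :
    ∃ c > (0 : ℝ), ∃ μs > (0 : ℝ), ∀ μ : ℝ, 0 < μ → μ < μs →
      IsUnit (Phat L QΔ A μ) ∧ IsUnit (Ptilde L QΔt At μ) ∧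
      spectralRadius ℂ (Tsmooth L Q QΔ A μ * Tcgc L Q A QΔt At TFQ TFA TCQ TCA μ) ≤
        ENNReal.ofReal (c * μ ^ ((1 : ℝ) / (L : ℝ))) := by
  haveI : Nonempty (Fin L) := Fin.pos_iff_nonempty.mp hL
  haveI : Nonempty (Fin M) := Fin.pos_iff_nonempty.mp hM
  haveI : Nonempty (Fin N) := Fin.pos_iff_nonempty.mp hN
  -- nilpotency of the coarse E ⊗ H
  have hEcnil : IsNilpotent (EH L M' N') := by
    refine ⟨L, ?_⟩
    show (Emat L ⊗ₖ Hmat M' N') ^ L = 0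
    rw [kron_pow, Emat_pow_self, Matrix.zero_kronecker]
  -- nilpotency of EH * (1 - T_C^F T_F^C)
  have hTT : TCFmat L TCQ TCA * TFCmat L TFQ TFA =
      (1 : Matrix (Fin L) (Fin L) ℂ) ⊗ₖ ((cmplx TCQ ⊗ₖ TCA) * (cmplx TFQ ⊗ₖ TFA)) := by
    show ((1 : Matrix (Fin L) (Fin L) ℂ) ⊗ₖ (cmplx TCQ ⊗ₖ TCA)) *
        ((1 : Matrix (Fin L) (Fin L) ℂ) ⊗ₖ (cmplx TFQ ⊗ₖ TFA)) = _
    rw [← Matrix.mul_kronecker_mul, one_mul]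
  have hsub : (1 : Matrix (Fin L × Fin M × Fin N) (Fin L × Fin M × Fin N) ℂ)
      - TCFmat L TCQ TCA * TFCmat L TFQ TFA =
      (1 : Matrix (Fin L) (Fin L) ℂ) ⊗ₖ
        ((1 : Matrix (Fin M × Fin N) (Fin M × Fin N) ℂ)
          - (cmplx TCQ ⊗ₖ TCA) * (cmplx TFQ ⊗ₖ TFA)) := by
    rw [hTT, ← kronecker_sub_right, Matrix.one_kronecker_one]
  have hprod : EH L M N * (1 - TCFmat L TCQ TCA * TFCmat L TFQ TFA) =
      Emat L ⊗ₖ (Hmat M N * ((1 : Matrix (Fin M × Fin N) (Fin M × Fin N) ℂ)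
        - (cmplx TCQ ⊗ₖ TCA) * (cmplx TFQ ⊗ₖ TFA))) := by
    rw [hsub]
    show (Emat L ⊗ₖ Hmat M N) * _ = _
    rw [← Matrix.mul_kronecker_mul, mul_one]
  have hnil : (EH L M N * (1 - TCFmat L TCQ TCA * TFCmat L TFQ TFA)) ^ L = 0 := by
    rw [hprod, kron_pow, Emat_pow_self, Matrix.zero_kronecker]
  exact pfasst_core L hL
    ((1 : Matrix (Fin L) (Fin L) ℂ) ⊗ₖ (cmplx Q ⊗ₖ A))
    ((1 : Matrix (Fin L) (Fin L) ℂ) ⊗ₖ (cmplx QΔ ⊗ₖ A))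
    (EH L M N)
    ((1 : Matrix (Fin L) (Fin L) ℂ) ⊗ₖ (cmplx QΔt ⊗ₖ At))
    (EH L M' N')
    (TFCmat L TFQ TFA) (TCFmat L TCQ TCA) hEcnil hnil hcompat
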